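/- Let z ∈ ℂ with |z| < 1, let N ≥ 2 be an integer with N ≤ 1/(1 − |z|)^{1/2}, and define G_{nj} = (1 − |z|)/(1 − |z|·cos(2π(n−j)/N)) for 0 ≤ n, j ≤ N−1. Then there is a universal constant C such that Σ_{n=1}^{N−1} |G_{n0}|² ≤ C, i.e. the off-diagonal ℓ² column norms of the matrix G are bounded independently of z and N. -/

import Mathlib

open scoped Real

private lemma term_le (r c : ℝ) (θ : ℝ) (hr0 : 0 ≤ r) (hr1 : r < 1)
    (hc0 : 0 < c) (hc : c ≤ 1 - Real.cos θ) :
    ((1 - r) / (1 - r * Real.cos θ)) ^ 2 ≤ (2 * (1 - r) / c) ^ 2 := by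
  have hcos1 : Real.cos θ ≤ 1 := Real.cos_le_one θ
  have hcos2 : -1 ≤ Real.cos θ := Real.neg_one_le_cos θ
  have hD : (1 - Real.cos θ) / 2 ≤ 1 - r * Real.cos θ := by nlinarith
  have hD0 : 0 < 1 - r * Real.cos θ := by nlinarith
  have h1 : (1 - r) / (1 - r * Real.cos θ) ≤ 2 * (1 - r) / c := by
    rw [div_le_div_iff₀ hD0 hc0]
    nlinarith
  have h0 : 0 ≤ (1 - r) / (1 - r * Real.cos θ) := div_nonneg (by linarith) hD0.le
  nlinarith

set_option maxHeartbeats 1000000 in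
theorem stmt_17 :
    ∃ C : ℝ, ∀ (z : ℂ) (N : ℕ), ‖z‖ < 1 → 2 ≤ N →
      (N : ℝ) ≤ 1 / Real.sqrt (1 - ‖z‖) →
      ∑ n ∈ Finset.Ico 1 N,
          ((1 - ‖z‖) / (1 - ‖z‖ * Real.cos (2 * π * n / N))) ^ 2
        ≤ C := by
  use 4
  intro z N hz hN hle
  set r := ‖z‖ with hr
  have hr0 : 0 ≤ r := norm_nonneg z
  have h1r : (0:ℝ) < 1 - r := by linarith
  have hN0 : (0:ℝ) < N := by positivity
  -- 1 - r ≤ 1 / N ^ 2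
  have hNr : (N:ℝ)^2 * (1 - r) ≤ 1 := by
    have hs : Real.sqrt (1 - r) > 0 := Real.sqrt_pos.mpr h1r
    have : (N:ℝ) * Real.sqrt (1 - r) ≤ 1 := (le_div_iff₀ hs).mp hle
    have hsq : ((N:ℝ) * Real.sqrt (1-r))^2 ≤ 1 := by nlinarith [mul_nonneg hN0.le (Real.sqrt_nonneg (1-r))]
    rwa [mul_pow, Real.sq_sqrt h1r.le] at hsq
  -- termwise bound
  have key : ∀ n ∈ Finset.Ico 1 N,
      ((1 - r) / (1 - r * Real.cos (2 * π * n / N))) ^ 2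
        ≤ ((n:ℝ)^2)⁻¹ + (((N - n : ℕ):ℝ)^2)⁻¹ := by
    intro n hn
    rw [Finset.mem_Ico] at hn
    obtain ⟨hn1, hnN⟩ := hn
    set m : ℕ := min n (N - n) with hm
    have hm1 : 1 ≤ m := by
      simp only [hm, le_min_iff]
      exact ⟨hn1, by omega⟩
    have hmN : (m:ℝ) ≤ N := by
      have : m ≤ N := le_trans (min_le_left _ _) hnN.le
      exact_mod_cast this
    have hm0 : (0:ℝ) < m := by exact_mod_cast hm1
    -- sin lower bound : 2*m/N ≤ sin (π*n/N)
    have hsin : 2 * (m:ℝ) / N ≤ Real.sin (π * n / N) := by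
      rcases le_or_gt (2*n) N with h2n | h2n
      · have hmn : m = n := by omega
        have hb : π * n / N ≤ π / 2 := by
          rw [div_le_div_iff₀ hN0 two_pos]
          have : (2:ℝ) * n ≤ N := by exact_mod_cast h2n
          nlinarith [Real.pi_pos]
        have := Real.mul_le_sin (x := π * n / N) (by positivity) hb
        calc 2 * (m:ℝ) / N = 2 / π * (π * n / N) := by
              rw [hmn]; field_simp [Real.pi_ne_zero]
          _ ≤ Real.sin (π * n / N) := this
      · have hmn : m = N - n := by omega
        have hsin_eq : Real.sin (π * n / N) = Real.sin (π * (N - n : ℕ) / N) := by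
          have hNn : ((N - n : ℕ):ℝ) = (N:ℝ) - n := by
            have : n ≤ N := hnN.le
            push_cast [this]; ring
          rw [hNn]
          rw [show π * ((N:ℝ) - n) / N = π - π * n / N by field_simp]
          rw [Real.sin_pi_sub]
        have hb : π * (N - n : ℕ) / N ≤ π / 2 := by
          rw [div_le_div_iff₀ hN0 two_pos]
          have : (2:ℝ) * ((N - n : ℕ):ℝ) ≤ N := by
            have : 2 * (N - n) ≤ N := by omega
            exact_mod_cast this
          nlinarith [Real.pi_pos]
        have := Real.mul_le_sin (x := π * (N - n : ℕ) / N) (by positivity) hb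
        rw [hsin_eq]
        calc 2 * (m:ℝ) / N = 2 / π * (π * (N - n : ℕ) / N) := by
              rw [hmn]; field_simp [Real.pi_ne_zero]
          _ ≤ Real.sin (π * (N - n : ℕ) / N) := this
    -- 1 - cos(2πn/N) ≥ 8 m²/N²
    have hcos : 8 * (m:ℝ)^2 / N^2 ≤ 1 - Real.cos (2 * π * n / N) := by
      have h2 : Real.cos (2 * π * n / N) = 1 - 2 * Real.sin (π * n / N) ^ 2 := by
        rw [show 2 * π * n / N = 2 * (π * n / N) by ring, Real.cos_two_mul,
          Real.cos_sq']
        ring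
      rw [h2]
      have hs0 : 0 ≤ 2 * (m:ℝ) / N := by positivity
      have hsq : (2*(m:ℝ)/N)^2 ≤ Real.sin (π*n/N)^2 := by
        apply pow_le_pow_left₀ hs0 hsin
      have heq : 8*(m:ℝ)^2/(N:ℝ)^2 = 2*(2*(m:ℝ)/N)^2 := by
        field_simp; ring
      rw [heq]; linarith
    have hc0 : (0:ℝ) < 8 * (m:ℝ)^2 / N^2 := by positivity
    have := term_le r (8 * (m:ℝ)^2 / N^2) (2 * π * n / N) hr0 hz hc0 hcos
    refine this.trans ?_
    -- (2*(1-r)/(8m²/N²))² = ((1-r)N²/(4m²))² ≤ (1/(4m²))² ≤ 1/m² ≤ 1/n² + 1/(N-n)²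
    have h1 : 2 * (1 - r) / (8 * (m:ℝ)^2 / N^2) = (1-r) * N^2 / (4 * m^2) := by
      field_simp; ring
    rw [h1]
    have h2 : (1-r) * (N:ℝ)^2 / (4 * m^2) ≤ 1 / (4 * m^2) := by
      apply div_le_div_of_nonneg_right _ (by positivity)
      nlinarith
    have h3 : ((1-r) * (N:ℝ)^2 / (4 * m^2))^2 ≤ (1 / (4 * (m:ℝ)^2))^2 := by
      apply pow_le_pow_left₀ (by positivity) h2
    refine h3.trans ?_
    have hm1' : (1:ℝ) ≤ m := by exact_mod_cast hm1
    have h4 : (1 / (4 * (m:ℝ)^2))^2 ≤ ((m:ℝ)^2)⁻¹ := by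
      have ha : 1 ≤ (m:ℝ)^2 := by nlinarith
      have hb : (m:ℝ)^2 * 1 ≤ (m:ℝ)^2 * ((m:ℝ)^2) :=
        mul_le_mul_of_nonneg_left ha (by positivity)
      rw [inv_eq_one_div, div_pow, one_pow, div_le_div_iff₀ (by positivity) (by positivity)]
      nlinarith [hb]
    refine h4.trans ?_
    rcases le_total n (N - n) with h | h
    · have hmm : m = n := by omega
      rw [hmm]
      have : (0:ℝ) ≤ (((N - n : ℕ):ℝ)^2)⁻¹ := by positivity
      linarith
    · have hmm : m = N - n := by omega
      rw [hmm]
      have : (0:ℝ) ≤ ((n:ℝ)^2)⁻¹ := by positivity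
      linarith
  calc ∑ n ∈ Finset.Ico 1 N, ((1 - r) / (1 - r * Real.cos (2 * π * n / N))) ^ 2
      ≤ ∑ n ∈ Finset.Ico 1 N, (((n:ℝ)^2)⁻¹ + (((N - n : ℕ):ℝ)^2)⁻¹) :=
        Finset.sum_le_sum key
    _ = ∑ n ∈ Finset.Ico 1 N, ((n:ℝ)^2)⁻¹ + ∑ n ∈ Finset.Ico 1 N, (((N - n : ℕ):ℝ)^2)⁻¹ :=
        Finset.sum_add_distrib
    _ ≤ 2 + 2 := by
        have hA : ∑ n ∈ Finset.Ico 1 N, ((n:ℝ)^2)⁻¹ ≤ 2 := by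
          have h := sum_Ioo_inv_sq_le (α := ℝ) 0 N
          have he : Finset.Ico 1 N = Finset.Ioo 0 N := Finset.Ico_add_one_left_eq_Ioo 0 N
          rw [he]
          simpa using h
        have hB : ∑ n ∈ Finset.Ico 1 N, (((N - n : ℕ):ℝ)^2)⁻¹
            = ∑ n ∈ Finset.Ico 1 N, ((n:ℝ)^2)⁻¹ := by
          apply Finset.sum_nbij' (fun n => N - n) (fun n => N - n)
          · intro a ha; rw [Finset.mem_Ico] at *; omega
          · intro a ha; rw [Finset.mem_Ico] at *; omega
          · intro a ha; rw [Finset.mem_Ico] at ha; omega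
          · intro a ha; rw [Finset.mem_Ico] at ha; omega
          · intro a ha; rfl
        rw [hB]
        linarith
    _ = 4 := by norm_num
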